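/- Every pointed multi-relational Kripke model can be simulated in the belief base semantics: given a finite Kripke model M = (W, ⇒₁,…,⇒ₙ, V) and w ∈ W, and an injection name : W → PROP avoiding the atoms of a given formula φ, define the context C = { B^v : v ∈ W } where agent i's base at B^v is the singleton { ⋁_{u : v ⇒ᵢ u} name(u) } and the state of B^v is (V(v) ∩ PROP(φ)) ∪ {name(v)}. Then for the given φ of the basic epistemic language, (B^w, C) ⊨ φ if and only if (M, w) ⊨ φ. -/
import Mathlib



/-- Explicit-belief language L₀ over atoms ℕ and agents `Fin n`. -/
inductive Form0 (n : ℕ) : Type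
  | atom : ℕ → Form0 n
  | neg : Form0 n → Form0 n
  | conj : Form0 n → Form0 n → Form0 n
  | tri : Fin n → Form0 n → Form0 n

/-- Multi-agent belief base. -/
structure MBB (n : ℕ) where
  base : Fin n → Set (Form0 n)
  state : Set ℕ

/-- Satisfaction of L₀-formulas at an MBB. -/
def sat0 {n : ℕ} (B : MBB n) : Form0 n → Prop
  | .atom p => p ∈ B.state
  | .neg a => ¬ sat0 B a
  | .conj a b => sat0 B a ∧ sat0 B b
  | .tri i a => a ∈ B.base i

/-- A correct MBB: every explicit belief is true at it. -/
def MBB.Correct {n : ℕ} (B : MBB n) : Prop := ∀ i : Fin n, ∀ a ∈ B.base i, sat0 B a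

/-- Epistemic alternative relation: B Rᵢ B' iff B' satisfies everything in agent i's base at B. -/
def EpiAlt {n : ℕ} (i : Fin n) (B B' : MBB n) : Prop := ∀ a ∈ B.base i, sat0 B' a

/-- Basic epistemic language L_EL. -/
inductive FormEL (n : ℕ) : Type
  | atom : ℕ → FormEL n
  | neg : FormEL n → FormEL n
  | conj : FormEL n → FormEL n → FormEL n
  | box : Fin n → FormEL n → FormEL n

/-- Satisfaction of L_EL at an MBM (B, C). -/
def satEL {n : ℕ} (C : Set (MBB n)) (B : MBB n) : FormEL n → Prop
  | .atom p => p ∈ B.state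
  | .neg a => ¬ satEL C B a
  | .conj a b => satEL C B a ∧ satEL C B b
  | .box i a => ∀ B' ∈ C, EpiAlt i B B' → satEL C B' a

/-- Multi-relational Kripke model. -/
structure Kripke (n : ℕ) where
  W : Type
  rel : Fin n → W → W → Prop
  val : ℕ → W → Prop

/-- Kripke satisfaction for L_EL. -/
def satK {n : ℕ} (M : Kripke n) (w : M.W) : FormEL n → Prop
  | .atom p => M.val p w
  | .neg a => ¬ satK M w a
  | .conj a b => satK M w a ∧ satK M w b
  | .box i a => ∀ v, M.rel i w v → satK M v a

/-- Atoms occurring in an L_EL formula. -/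
def atomsEL {n : ℕ} : FormEL n → Finset ℕ
  | .atom p => {p}
  | .neg a => atomsEL a
  | .conj a b => atomsEL a ∪ atomsEL b
  | .box _ a => atomsEL a

def orF0 {n : ℕ} (a b : Form0 n) : Form0 n := .neg (.conj (.neg a) (.neg b))

/-- Disjunction of a list of L₀ formulas (⊥ for the empty list). -/
def orL0 {n : ℕ} : List (Form0 n) → Form0 n
  | [] => .conj (.atom 0) (.neg (.atom 0))
  | a :: l => orF0 a (orL0 l)

attribute [local instance] Classical.propDecidable

/-- The MBB B^v simulating world v: agent i's base is the singleton
{ ⋁_{u : v ⇒ᵢ u} name(u) } and the state is (V(v) ∩ PROP(φ)) ∪ {name v}. -/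
noncomputable def simB {n : ℕ} (M : Kripke n) [Fintype M.W] (name : M.W → ℕ)
    (A : Finset ℕ) (v : M.W) : MBB n :=
  { base := fun i =>
      { orL0 (((Finset.univ.filter (fun u => M.rel i v u)).toList).map
          (fun u => Form0.atom (name u))) },
    state := { p | p ∈ A ∧ M.val p v } ∪ { name v } }

lemma sat0_orL0 {n : ℕ} (B : MBB n) (l : List (Form0 n)) :
    sat0 B (orL0 l) ↔ ∃ a ∈ l, sat0 B a := by
  induction l with
  | nil => simp [orL0, sat0]
  | cons a l ih =>
    simp only [orL0, orF0, sat0, ih, List.mem_cons]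
    constructor
    · intro h
      by_cases ha : sat0 B a
      · exact ⟨a, Or.inl rfl, ha⟩
      · have h2 : ¬¬∃ b ∈ l, sat0 B b := fun hn => h ⟨ha, hn⟩
        obtain ⟨b, hb, hs⟩ := not_not.mp h2
        exact ⟨b, Or.inr hb, hs⟩
    · rintro ⟨b, hb | hb, hs⟩ ⟨h1, h2⟩
      · exact h1 (hb ▸ hs)
      · exact h2 ⟨b, hb, hs⟩

lemma epiAlt_simB {n : ℕ} (M : Kripke n) [Fintype M.W] (name : M.W → ℕ)
    (hinj : Function.Injective name) (A : Finset ℕ) (hA : ∀ v : M.W, name v ∉ A)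
    (i : Fin n) (w v : M.W) :
    EpiAlt i (simB M name A w) (simB M name A v) ↔ M.rel i w v := by
  constructor
  · intro h
    have := h _ rfl
    rw [sat0_orL0] at this
    rcases this with ⟨a, ha, hs⟩
    simp only [List.mem_map, Finset.mem_toList, Finset.mem_filter] at ha
    rcases ha with ⟨u, ⟨_, hu⟩, rfl⟩
    rcases (hs : name u ∈ (simB M name A v).state) with ⟨hmem, _⟩ | heq
    · exact absurd hmem (hA u)
    · exact (hinj heq) ▸ hu
  · intro h a ha
    rcases (ha : a ∈ _) with rfl
    rw [sat0_orL0]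
    refine ⟨Form0.atom (name v), ?_, Or.inr rfl⟩
    simp only [List.mem_map, Finset.mem_toList, Finset.mem_filter]
    exact ⟨v, ⟨Finset.mem_univ v, h⟩, rfl⟩

lemma stmt17_gen {n : ℕ} (M : Kripke n) [Fintype M.W] (name : M.W → ℕ)
    (hinj : Function.Injective name) (A : Finset ℕ) (hA : ∀ v : M.W, name v ∉ A)
    (φ : FormEL n) (hsub : atomsEL φ ⊆ A) (w : M.W) :
    satEL { B : MBB n | ∃ v : M.W, B = simB M name A v } (simB M name A w) φ ↔
      satK M w φ := by
  induction φ generalizing w with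
  | atom p =>
    have hp : p ∈ A := hsub (by simp [atomsEL])
    simp only [satEL, satK]
    constructor
    · rintro (⟨_, h⟩ | heq)
      · exact h
      · exact absurd (heq ▸ hp) (hA w)
    · intro h; exact Or.inl ⟨hp, h⟩
  | neg a ih => simp only [satEL, satK]; rw [ih hsub]
  | conj a b iha ihb =>
    simp only [satEL, satK, atomsEL] at *
    rw [iha (fun x hx => hsub (Finset.mem_union_left _ hx)),
        ihb (fun x hx => hsub (Finset.mem_union_right _ hx))]
  | box i a ih =>
    simp only [satEL, satK, atomsEL] at *
    constructor
    · intro h v hv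
      rw [← ih hsub]
      exact h _ ⟨v, rfl⟩ ((epiAlt_simB M name hinj A hA i w v).mpr hv)
    · rintro h B' ⟨v, rfl⟩ he
      rw [ih hsub]
      exact h v ((epiAlt_simB M name hinj A hA i w v).mp he)

/-- every pointed finite Kripke model is simulated in the belief base semantics
via the context C = { B^v : v ∈ W }. -/
theorem stmt17 (n : ℕ) (M : Kripke n) [Fintype M.W] (w : M.W) (φ : FormEL n)
    (name : M.W → ℕ) (hinj : Function.Injective name)
    (havoid : ∀ v : M.W, name v ∉ atomsEL φ) :
    satEL { B : MBB n | ∃ v : M.W, B = simB M name (atomsEL φ) v }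
        (simB M name (atomsEL φ) w) φ ↔
      satK M w φ :=
  stmt17_gen M name hinj (atomsEL φ) havoid φ (le_refl _) w
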